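/- Under differentiated tolls with ν^{HV,HO} ≤ ν^{AV,LO} and φ₁* ≤ δ^{AV,LO} + δ^{AV,HO}, assigning toll vector (τ₊, τ₊, τ*) with τ₊ > τ* to (HV,LO; HV,HO; AV,LO) makes the flow split f₁ = (0, 0, (φ₁* − δ^{AV,HO})/μ) the unique lane choice equilibrium, which achieves the best-case total commuter delay J*(τ*) attainable under the uniform toll τ*. -/

import Mathlib

/-- Proposition 2, case 1a): toll differentiation. Suppose
`ν^{HV,HO} ≤ ν^{AV,LO}` (i.e. `n_HO ≤ n_LO/μ`) and the optimal uniform toll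
`τ* > 0` induces an interior equilibrium flow `φ₁*` with
`φ₁* ≤ δ^{AV,LO} + δ^{AV,HO}`.  Then under the heterogeneous toll vector
`(τ₊, τ₊, τ*)` with `τ₊ > τ*` the flow split
`f₁ = (0, 0, (φ₁* − δ^{AV,HO})/μ)` is the unique lane choice equilibrium, and
it achieves the best-case total commuter delay attainable on the uniform-toll
equilibrium simplex `S`. -/
theorem toll_differentiation_case_1a
    (D1 D2 : ℝ → ℝ) (hD1c : Continuous D1) (hD2c : Continuous D2)
    (hD1 : StrictMono D1) (hD2 : StrictMono D2)
    (nLO nHO μ τstar τplus δAVHO dvAVHO dL dH dA φ1star : ℝ)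
    (hnLO : 0 < nLO) (hn : nLO < nHO) (hμ0 : 0 < μ) (hμ1 : μ < 1)
    (hmob : nHO ≤ nLO / μ)
    (hτstar : 0 < τstar) (hτplus : τplus > τstar)
    (hδAVHO : 0 < δAVHO) (hdL : 0 < dL) (hdH : 0 < dH) (hdA : 0 < dA)
    (Sδ : ℝ) (hSδ : Sδ = dL + dH + μ * dA + δAVHO)
    -- interior equilibrium flow under the uniform toll τ*
    (heq : D1 φ1star + τstar = D2 (Sδ - φ1star))
    (hφlo : δAVHO ≤ φ1star)
    -- case condition φ₁* ≤ δ^{AV,LO} + δ^{AV,HO}, with δ^{AV,LO} = μ d_A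
    (hcase : φ1star ≤ μ * dA + δAVHO)
    -- the uniform-toll equilibrium simplex and the total commuter delay
    (S : Set (ℝ × ℝ × ℝ))
    (hS : S = {f | 0 ≤ f.1 ∧ f.1 ≤ dL ∧ 0 ≤ f.2.1 ∧ f.2.1 ≤ dH ∧
        0 ≤ f.2.2 ∧ f.2.2 ≤ dA ∧ f.1 + f.2.1 + μ * f.2.2 = φ1star - δAVHO})
    (J : ℝ × ℝ × ℝ → ℝ)
    (hJ : J = fun f => (nLO * (f.1 + f.2.2) + nHO * (f.2.1 + dvAVHO)) * D1 φ1star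
        + (nLO * ((dL - f.1) + (dA - f.2.2)) + nHO * (dH - f.2.1))
          * D2 (Sδ - φ1star))
    -- the target flow split
    (target : ℝ × ℝ × ℝ) (htarget : target = (0, 0, (φ1star - δAVHO) / μ)) :
    -- it is the best-case equilibrium under the uniform toll:
    (target ∈ S ∧ ∀ f ∈ S, J target ≤ J f) ∧
    -- and it is the unique equilibrium under the heterogeneous tolls (τ₊,τ₊,τ*):
    (∀ f : ℝ × ℝ × ℝ,
      (0 ≤ f.1 ∧ f.1 ≤ dL ∧ 0 ≤ f.2.1 ∧ f.2.1 ≤ dH ∧ 0 ≤ f.2.2 ∧ f.2.2 ≤ dA) →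
      (∀ φ1 φ2 : ℝ, φ1 = f.1 + f.2.1 + μ * f.2.2 + δAVHO → φ2 = Sδ - φ1 →
        f.1 * (D1 φ1 + τplus - D2 φ2) ≤ 0 ∧
        (dL - f.1) * (D2 φ2 - D1 φ1 - τplus) ≤ 0 ∧
        f.2.1 * (D1 φ1 + τplus - D2 φ2) ≤ 0 ∧
        (dH - f.2.1) * (D2 φ2 - D1 φ1 - τplus) ≤ 0 ∧
        f.2.2 * (D1 φ1 + τstar - D2 φ2) ≤ 0 ∧
        (dA - f.2.2) * (D2 φ2 - D1 φ1 - τstar) ≤ 0) →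
      f = target) := by
  subst hS hJ htarget hSδ
  have hmob' : nHO * μ ≤ nLO := (le_div_iff₀ hμ0).mp hmob
  have hq : μ * ((φ1star - δAVHO) / μ) = φ1star - δAVHO := by field_simp
  have hτ : D2 (dL + dH + μ * dA + δAVHO - φ1star) = D1 φ1star + τstar := heq.symm
  constructor
  · constructor
    · refine ⟨le_refl 0, hdL.le, le_refl 0, hdH.le, ?_, ?_, ?_⟩
      · exact div_nonneg (by linarith) hμ0.le
      · rw [div_le_iff₀ hμ0]; nlinarith
      · simpa using hq
    · rintro ⟨f1, f2, f3⟩ ⟨h1, h2, h3, h4, h5, h6, h7⟩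
      simp only at h1 h2 h3 h4 h5 h6 h7 ⊢
      have key2 : μ * (nLO * f1 + nHO * f2 + nLO * f3) ≤ nLO * (φ1star - δAVHO) := by
        nlinarith [mul_nonneg (mul_nonneg hnLO.le h1) (sub_nonneg.2 hμ1.le),
          mul_nonneg h3 (sub_nonneg.2 hmob'), h7]
      have key : nLO * f1 + nHO * f2 + nLO * f3 ≤ nLO * ((φ1star - δAVHO) / μ) := by
        rw [← mul_le_mul_iff_right₀ hμ0]
        have hq' : nLO * (μ * ((φ1star - δAVHO) / μ)) = nLO * (φ1star - δAVHO) := by rw [hq]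
        linarith [key2, hq']
      rw [hτ]
      linarith [mul_nonneg (sub_nonneg.2 key) hτstar.le]
  · rintro ⟨f1, f2, f3⟩ ⟨h1, h2, h3, h4, h5, h6⟩ hcond
    simp only at h1 h2 h3 h4 h5 h6
    obtain ⟨c1, c2, c3, c4, c5, c6⟩ :=
      hcond (f1 + f2 + μ * f3 + δAVHO) (dL + dH + μ * dA + δAVHO - (f1 + f2 + μ * f3 + δAVHO))
        rfl rfl
    simp only at c1 c2 c3 c4 c5 c6 ⊢
    set φ1 := f1 + f2 + μ * f3 + δAVHO with hφ1
    set φ2 := dL + dH + μ * dA + δAVHO - φ1 with hφ2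
    rcases lt_trichotomy φ1 φ1star with hlt | heqc | hgt
    · exfalso
      have hΔ : D1 φ1 + τstar - D2 φ2 < 0 := by
        have h1' := hD1 hlt
        have h2' : D2 (dL + dH + μ * dA + δAVHO - φ1star) < D2 φ2 := hD2 (by rw [hφ2]; linarith)
        linarith [hτ]
      have hf3 : dA ≤ f3 := by
        by_contra h
        push_neg at h
        have := mul_pos (by linarith : (0:ℝ) < dA - f3)
          (by linarith : (0:ℝ) < D2 φ2 - D1 φ1 - τstar)
        linarith [c6]
      have := mul_le_mul_of_nonneg_left hf3 hμ0.le
      linarith [hφ1]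
    · have hΔ : D1 φ1 + τstar - D2 φ2 = 0 := by
        rw [heqc, hφ2, heqc]; linarith [hτ]
      have hp1 : 0 < D1 φ1 + τplus - D2 φ2 := by linarith
      have hf1 : f1 = 0 := by
        by_contra h
        have hf1' : 0 < f1 := lt_of_le_of_ne h1 (Ne.symm h)
        have := mul_pos hf1' hp1
        linarith [c1]
      have hf2 : f2 = 0 := by
        by_contra h
        have hf2' : 0 < f2 := lt_of_le_of_ne h3 (Ne.symm h)
        have := mul_pos hf2' hp1
        linarith [c3]
      have hf3 : f3 = (φ1star - δAVHO) / μ := by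
        field_simp
        rw [hφ1, hf1, hf2] at heqc
        linarith [heqc]
      exact Prod.ext hf1 (Prod.ext hf2 hf3)
    · exfalso
      have hΔ : 0 < D1 φ1 + τstar - D2 φ2 := by
        have h1' := hD1 hgt
        have h2' : D2 φ2 < D2 (dL + dH + μ * dA + δAVHO - φ1star) := hD2 (by rw [hφ2]; linarith)
        linarith [hτ]
      have hp1 : 0 < D1 φ1 + τplus - D2 φ2 := by linarith
      have hf3 : f3 ≤ 0 := by
        by_contra h
        push_neg at h
        have := mul_pos h hΔ
        linarith [c5]
      have hf1 : f1 ≤ 0 := by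
        by_contra h
        push_neg at h
        have := mul_pos h hp1
        linarith [c1]
      have hf2 : f2 ≤ 0 := by
        by_contra h
        push_neg at h
        have := mul_pos h hp1
        linarith [c3]
      have := mul_le_mul_of_nonneg_left hf3 hμ0.le
      linarith [hφ1]
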